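/- In the full dictionary-LASSO setting with the block partition, the free-part error satisfies ‖d‖ = ‖α̂ − α*‖ ≤ W_{d,1}·‖Z⁺(Zh)_{T₀₁}‖ + W_{d,2}·‖(Zh)_{T₀}‖ + ‖(AᵀA)⁻¹Aᵀε‖, where W_{d,1} = ½·σ_min(AᵀA)⁻¹·(ρ̄⁺(p−r, s+l) − ρ̄⁻(p−r, s+l)) and W_{d,2} = (3/2)·σ_min(AᵀA)⁻¹·σ_min(Z)⁻¹·√(s/l)·(ρ̄⁺(p−r, l) − ρ̄⁻(p−r, l)), with ρ̄±(p−r, k) := ρ±_{[A B],Z⁺}(p−r, k) and T₀₁ = T₀ ∪ T₁. -/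

import Mathlib

open scoped BigOperators
open Matrix MeasureTheory ProbabilityTheory

/-- Euclidean norm of a vector in `ℝ^n`. -/
noncomputable def vnorm {n : ℕ} (v : Fin n → ℝ) : ℝ := Real.sqrt (∑ i, v i ^ 2)

/-- ℓ¹ norm. -/
noncomputable def vnorm1 {n : ℕ} (v : Fin n → ℝ) : ℝ := ∑ i, |v i|

/-- ℓ∞ norm. -/
noncomputable def vnormInf {n : ℕ} (v : Fin n → ℝ) : ℝ := ⨆ i, |v i|

/-- Restriction of a vector to an index set: coordinates outside `T` are set to zero. -/
noncomputable def restr {m : ℕ} (T : Finset (Fin m)) (w : Fin m → ℝ) : Fin m → ℝ :=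
  fun i => if i ∈ T then w i else 0

/-- Support of a vector. -/
noncomputable def suppSet {m : ℕ} (w : Fin m → ℝ) : Finset (Fin m) :=
  Finset.univ.filter (fun i => w i ≠ 0)

/-- `𝓗(Y, k)`: all vectors `Y v` with `v` having at most `k` nonzero coordinates. -/
noncomputable def sparseCone {q t : ℕ} (Y : Matrix (Fin q) (Fin t) ℝ) (k : ℕ) :
    Set (Fin q → ℝ) :=
  {w | ∃ v : Fin t → ℝ, (Finset.univ.filter fun i => v i ≠ 0).card ≤ k ∧ w = Y.mulVec v}

/-- `ρ⁺_{Ψ,Y}(k)` (the `l₁ = 0` version). -/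
noncomputable def rhoPlus0 {n q t : ℕ} (Ψ : Matrix (Fin n) (Fin q) ℝ)
    (Y : Matrix (Fin q) (Fin t) ℝ) (k : ℕ) : ℝ :=
  sSup {x | ∃ w ∈ sparseCone Y k, w ≠ 0 ∧ x = vnorm (Ψ.mulVec w) ^ 2 / vnorm w ^ 2}

/-- `ρ⁻_{Ψ,Y}(k)` (the `l₁ = 0` version). -/
noncomputable def rhoMinus0 {n q t : ℕ} (Ψ : Matrix (Fin n) (Fin q) ℝ)
    (Y : Matrix (Fin q) (Fin t) ℝ) (k : ℕ) : ℝ :=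
  sInf {x | ∃ w ∈ sparseCone Y k, w ≠ 0 ∧ x = vnorm (Ψ.mulVec w) ^ 2 / vnorm w ^ 2}

/-- `ρ⁺_{Ψ,Y}(l₁, k)`. -/
noncomputable def rhoPlus {n l₁ q t : ℕ} (Ψ : Matrix (Fin n) (Fin (l₁ + q)) ℝ)
    (Y : Matrix (Fin q) (Fin t) ℝ) (k : ℕ) : ℝ :=
  sSup {x | ∃ (u : Fin l₁ → ℝ) (w : Fin q → ℝ), w ∈ sparseCone Y k ∧ Fin.append u w ≠ 0 ∧
    x = vnorm (Ψ.mulVec (Fin.append u w)) ^ 2 / vnorm (Fin.append u w) ^ 2}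

/-- `ρ⁻_{Ψ,Y}(l₁, k)`. -/
noncomputable def rhoMinus {n l₁ q t : ℕ} (Ψ : Matrix (Fin n) (Fin (l₁ + q)) ℝ)
    (Y : Matrix (Fin q) (Fin t) ℝ) (k : ℕ) : ℝ :=
  sInf {x | ∃ (u : Fin l₁ → ℝ) (w : Fin q → ℝ), w ∈ sparseCone Y k ∧ Fin.append u w ≠ 0 ∧
    x = vnorm (Ψ.mulVec (Fin.append u w)) ^ 2 / vnorm (Fin.append u w) ^ 2}

/-- Column concatenation `[P Q]`. -/
def hcat {n a b : ℕ} (P : Matrix (Fin n) (Fin a) ℝ) (Q : Matrix (Fin n) (Fin b) ℝ) :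
    Matrix (Fin n) (Fin (a + b)) ℝ :=
  Matrix.of fun i => Fin.append (P i) (Q i)

/-- Smallest singular value: `min_{‖v‖ = 1} ‖Z v‖`. -/
noncomputable def sigmaMin {m r : ℕ} (Z : Matrix (Fin m) (Fin r) ℝ) : ℝ :=
  sInf {x | ∃ v : Fin r → ℝ, vnorm v = 1 ∧ x = vnorm (Z.mulVec v)}

/-- Largest singular value: `max_{‖v‖ = 1} ‖Z v‖`. -/
noncomputable def sigmaMax {m r : ℕ} (Z : Matrix (Fin m) (Fin r) ℝ) : ℝ :=
  sSup {x | ∃ v : Fin r → ℝ, vnorm v = 1 ∧ x = vnorm (Z.mulVec v)}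

namespace Aux

lemma vnorm_eq_norm {n : ℕ} (v : Fin n → ℝ) :
    vnorm v = ‖(WithLp.equiv 2 (Fin n → ℝ)).symm v‖ := by
  rw [EuclideanSpace.norm_eq]
  unfold vnorm
  congr 1
  apply Finset.sum_congr rfl
  intro i _
  show v i ^ 2 = ‖v i‖ ^ 2
  rw [Real.norm_eq_abs, sq_abs]

lemma vnorm_nonneg {n : ℕ} (v : Fin n → ℝ) : 0 ≤ vnorm v := Real.sqrt_nonneg _

lemma vnorm_sq {n : ℕ} (v : Fin n → ℝ) : vnorm v ^ 2 = ∑ i, v i ^ 2 := by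
  unfold vnorm
  rw [Real.sq_sqrt]
  positivity

lemma vnorm_eq_zero {n : ℕ} {v : Fin n → ℝ} (h : vnorm v = 0) : v = 0 := by
  have h2 : vnorm v ^ 2 = 0 := by rw [h]; ring
  rw [vnorm_sq] at h2
  funext i
  have := (Finset.sum_eq_zero_iff_of_nonneg (fun i _ => sq_nonneg (v i))).1 h2 i (Finset.mem_univ i)
  simpa using pow_eq_zero_iff (n := 2) (by norm_num) |>.1 this

lemma vnorm_zero {n : ℕ} : vnorm (0 : Fin n → ℝ) = 0 := by
  unfold vnorm; simp

lemma vnorm_pos {n : ℕ} {v : Fin n → ℝ} (h : v ≠ 0) : 0 < vnorm v := by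
  rcases lt_or_eq_of_le (vnorm_nonneg v) with h1 | h1
  · exact h1
  · exact absurd (vnorm_eq_zero h1.symm) h

lemma vnorm_add_le {n : ℕ} (a b : Fin n → ℝ) : vnorm (a + b) ≤ vnorm a + vnorm b := by
  rw [vnorm_eq_norm, vnorm_eq_norm, vnorm_eq_norm]
  exact norm_add_le _ _

lemma vnorm_neg {n : ℕ} (a : Fin n → ℝ) : vnorm (-a) = vnorm a := by
  rw [vnorm_eq_norm, vnorm_eq_norm]
  exact norm_neg _

lemma vnorm_sub_le {n : ℕ} (a b : Fin n → ℝ) : vnorm (a - b) ≤ vnorm a + vnorm b := by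
  rw [sub_eq_add_neg]
  simpa [vnorm_neg] using vnorm_add_le a (-b)

lemma vnorm_smul {n : ℕ} (c : ℝ) (a : Fin n → ℝ) : vnorm (c • a) = |c| * vnorm a := by
  rw [vnorm_eq_norm, vnorm_eq_norm]
  have : (WithLp.equiv 2 (Fin n → ℝ)).symm (c • a) = c • (WithLp.equiv 2 (Fin n → ℝ)).symm a := rfl
  rw [this, norm_smul, Real.norm_eq_abs]

lemma dot_self_eq {n : ℕ} (v : Fin n → ℝ) : v ⬝ᵥ v = vnorm v ^ 2 := by
  rw [vnorm_sq]; unfold dotProduct; exact Finset.sum_congr rfl fun i _ => (sq (v i)).symm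

lemma dot_le_vnorm_mul {n : ℕ} (a b : Fin n → ℝ) : a ⬝ᵥ b ≤ vnorm a * vnorm b := by
  have h := real_inner_le_norm ((WithLp.equiv 2 (Fin n → ℝ)).symm a) ((WithLp.equiv 2 (Fin n → ℝ)).symm b)
  have hi : (inner ℝ ((WithLp.equiv 2 (Fin n → ℝ)).symm a) ((WithLp.equiv 2 (Fin n → ℝ)).symm b) : ℝ) = a ⬝ᵥ b := by
    rw [PiLp.inner_apply]
    unfold dotProduct
    apply Finset.sum_congr rfl
    intro i _
    simp [RCLike.inner_apply, mul_comm]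
  rw [vnorm_eq_norm, vnorm_eq_norm, ← hi]
  exact h

/-- Bound on matrix-vector multiplication. -/
lemma exists_mulVec_bound {a b : ℕ} (M : Matrix (Fin a) (Fin b) ℝ) :
    ∃ C : ℝ, 0 < C ∧ ∀ v : Fin b → ℝ, vnorm (M.mulVec v) ≤ C * vnorm v := by
  let f : EuclideanSpace ℝ (Fin b) →ₗ[ℝ] EuclideanSpace ℝ (Fin a) :=
    { toFun := fun x => (WithLp.equiv 2 (Fin a → ℝ)).symm (M.mulVec ((WithLp.equiv 2 (Fin b → ℝ)) x))
      map_add' := by intro x y; ext i; simp [Matrix.mulVec_add]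
      map_smul' := by intro c x; ext i; simp [Matrix.mulVec_smul] }
  let g := LinearMap.toContinuousLinearMap f
  refine ⟨‖g‖ + 1, by positivity, fun v => ?_⟩
  have h := g.le_opNorm ((WithLp.equiv 2 (Fin b → ℝ)).symm v)
  have h2 : vnorm (M.mulVec v) ≤ ‖g‖ * vnorm v := by
    rw [vnorm_eq_norm, vnorm_eq_norm]
    exact h
  calc vnorm (M.mulVec v) ≤ ‖g‖ * vnorm v := h2
    _ ≤ (‖g‖ + 1) * vnorm v := by
        apply mul_le_mul_of_nonneg_right (by linarith) (vnorm_nonneg v)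

lemma dot_mulVec_left {a b : ℕ} (M : Matrix (Fin a) (Fin b) ℝ) (u : Fin b → ℝ) (q : Fin a → ℝ) :
    (M.mulVec u) ⬝ᵥ q = u ⬝ᵥ (Mᵀ.mulVec q) := by
  unfold dotProduct Matrix.mulVec dotProduct
  simp only [Matrix.transpose_apply, Finset.sum_mul, Finset.mul_sum]
  rw [Finset.sum_comm]
  apply Finset.sum_congr rfl; intro i _
  apply Finset.sum_congr rfl; intro j _
  ring

end Aux

namespace Aux

lemma hcat_mulVec {n a b : ℕ} (P : Matrix (Fin n) (Fin a) ℝ) (Q : Matrix (Fin n) (Fin b) ℝ)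
    (u : Fin a → ℝ) (w : Fin b → ℝ) :
    (hcat P Q).mulVec (Fin.append u w) = P.mulVec u + Q.mulVec w := by
  funext i
  show (Fin.append (P i) (Q i)) ⬝ᵥ (Fin.append u w) = _
  unfold dotProduct
  rw [Fin.sum_univ_add]
  simp [Fin.append_left, Fin.append_right]
  rfl

lemma vnorm_append_sq {a b : ℕ} (u : Fin a → ℝ) (w : Fin b → ℝ) :
    vnorm (Fin.append u w) ^ 2 = vnorm u ^ 2 + vnorm w ^ 2 := by
  rw [vnorm_sq, vnorm_sq, vnorm_sq, Fin.sum_univ_add]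
  simp [Fin.append_left, Fin.append_right]

lemma append_ne_zero_of_right {a b : ℕ} (u : Fin a → ℝ) {w : Fin b → ℝ} (hw : w ≠ 0) :
    Fin.append u w ≠ 0 := by
  intro hc
  apply hw
  funext i
  have := congrFun hc (Fin.natAdd a i)
  rwa [Fin.append_right] at this

/-- sigmaMin is nonneg. -/
lemma sigmaMin_nonneg {m r : ℕ} (Z : Matrix (Fin m) (Fin r) ℝ) : 0 ≤ sigmaMin Z := by
  apply Real.sInf_nonneg
  rintro x ⟨v, -, rfl⟩
  exact vnorm_nonneg _

lemma sigmaMin_mul_le {m r : ℕ} (Z : Matrix (Fin m) (Fin r) ℝ) (v : Fin r → ℝ) :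
    sigmaMin Z * vnorm v ≤ vnorm (Z.mulVec v) := by
  by_cases hv : v = 0
  · rw [hv, Matrix.mulVec_zero, vnorm_zero, mul_zero]
    exact vnorm_nonneg _
  · have hpos := vnorm_pos hv
    set c := (vnorm v)⁻¹
    have hc : 0 < c := inv_pos.2 hpos
    have hunit : vnorm (c • v) = 1 := by
      rw [vnorm_smul, abs_of_pos hc]
      exact inv_mul_cancel₀ hpos.ne'
    have hmem : vnorm (Z.mulVec (c • v)) ∈
        {x | ∃ v : Fin r → ℝ, vnorm v = 1 ∧ x = vnorm (Z.mulVec v)} := ⟨c • v, hunit, rfl⟩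
    have hbdd : BddBelow {x | ∃ v : Fin r → ℝ, vnorm v = 1 ∧ x = vnorm (Z.mulVec v)} :=
      ⟨0, by rintro x ⟨v, -, rfl⟩; exact vnorm_nonneg _⟩
    have hle : sigmaMin Z ≤ vnorm (Z.mulVec (c • v)) := csInf_le hbdd hmem
    have hzc : vnorm (Z.mulVec (c • v)) = c * vnorm (Z.mulVec v) := by
      rw [Matrix.mulVec_smul]
      have : Z.mulVec v |> fun x => c • x = c • Z.mulVec v := rfl
      rw [show c • Z.mulVec v = (c : ℝ) • (Z.mulVec v) from rfl] at *
      rw [vnorm_smul, abs_of_pos hc]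
    rw [hzc] at hle
    calc sigmaMin Z * vnorm v ≤ (c * vnorm (Z.mulVec v)) * vnorm v := by
          apply mul_le_mul_of_nonneg_right hle (le_of_lt hpos)
      _ = vnorm (Z.mulVec v) := by
          rw [mul_right_comm]
          show (vnorm v)⁻¹ * vnorm v * vnorm (Z.mulVec v) = _
          rw [inv_mul_cancel₀ hpos.ne', one_mul]

/-- If Z (tall, as linear operator) is injective via a left inverse bound, sigmaMin is positive. -/
lemma sigmaMin_pos {m r : ℕ} (Z : Matrix (Fin m) (Fin r) ℝ)
    (W : Matrix (Fin r) (Fin m) ℝ) (hWZ : W * Z = 1) (hr : 0 < r) : 0 < sigmaMin Z := by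
  obtain ⟨C, hC, hbound⟩ := exists_mulVec_bound W
  apply lt_of_lt_of_le (show (0:ℝ) < C⁻¹ from inv_pos.2 hC)
  apply le_csInf
  · -- nonempty: unit vector exists
    have : ∃ v : Fin r → ℝ, vnorm v = 1 := by
      refine ⟨fun j => if j = (⟨0, hr⟩ : Fin r) then (1:ℝ) else 0, ?_⟩
      unfold vnorm
      have hsum : (∑ i : Fin r, (if i = (⟨0, hr⟩ : Fin r) then (1:ℝ) else 0) ^ 2) = 1 := by
        rw [Finset.sum_eq_single (⟨0, hr⟩ : Fin r)]
        · simp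
        · intro b _ hb; rw [if_neg hb]; ring
        · intro hb; exact absurd (Finset.mem_univ _) hb
      rw [hsum]
      exact Real.sqrt_one
    obtain ⟨v, hv⟩ := this
    exact ⟨_, v, hv, rfl⟩
  · rintro x ⟨v, hv, rfl⟩
    have h1 : vnorm (W.mulVec (Z.mulVec v)) ≤ C * vnorm (Z.mulVec v) := hbound _
    rw [Matrix.mulVec_mulVec, hWZ, Matrix.one_mulVec, hv] at h1
    calc C⁻¹ = C⁻¹ * 1 := (mul_one _).symm
      _ ≤ C⁻¹ * (C * vnorm (Z.mulVec v)) :=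
          mul_le_mul_of_nonneg_left h1 (inv_pos.2 hC).le
      _ = vnorm (Z.mulVec v) := by field_simp

end Aux

namespace Aux

lemma vnorm_fin_zero (v : Fin 0 → ℝ) : vnorm v = 0 := by
  unfold vnorm; simp

lemma vnorm_add_sq {n : ℕ} (x y : Fin n → ℝ) :
    vnorm (x + y) ^ 2 = vnorm x ^ 2 + 2 * (x ⬝ᵥ y) + vnorm y ^ 2 := by
  rw [vnorm_sq, vnorm_sq, vnorm_sq]
  unfold dotProduct
  have h : ∀ i, ((x + y) i) ^ 2 = x i ^ 2 + 2 * (x i * y i) + y i ^ 2 := by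
    intro i; show (x i + y i)^2 = _; ring
  simp_rw [h]
  rw [Finset.sum_add_distrib, Finset.sum_add_distrib, ← Finset.mul_sum]

/-- Symmetric idempotent matrices are contractions. -/
lemma proj_contraction {n : ℕ} (P : Matrix (Fin n) (Fin n) ℝ) (hsym : Pᵀ = P)
    (hidem : P * P = P) (x : Fin n → ℝ) : vnorm (P.mulVec x) ≤ vnorm x := by
  set y := P.mulVec x with hy
  have h1 : y ⬝ᵥ y = x ⬝ᵥ y := by
    calc y ⬝ᵥ y = (P.mulVec x) ⬝ᵥ y := rfl
      _ = x ⬝ᵥ (Pᵀ.mulVec y) := dot_mulVec_left P x y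
      _ = x ⬝ᵥ (P.mulVec y) := by rw [hsym]
      _ = x ⬝ᵥ y := by rw [hy, Matrix.mulVec_mulVec, hidem]
  have h2 : vnorm y ^ 2 ≤ vnorm x * vnorm y := by
    rw [← dot_self_eq, h1]
    exact dot_le_vnorm_mul x y
  by_cases hz : vnorm y = 0
  · rw [hz]; exact vnorm_nonneg x
  · have hpos : 0 < vnorm y := lt_of_le_of_ne (vnorm_nonneg y) (Ne.symm hz)
    nlinarith

/-- Bound `‖G⁻¹ z‖ ≤ σmin(G)⁻¹ ‖z‖` for invertible `G`. -/
lemma inv_mulVec_bound {q : ℕ} (G : Matrix (Fin q) (Fin q) ℝ) (hG : IsUnit G.det)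
    (z : Fin q → ℝ) : vnorm (G⁻¹.mulVec z) ≤ (sigmaMin G)⁻¹ * vnorm z := by
  rcases Nat.eq_zero_or_pos q with hq | hq
  · subst hq
    rw [vnorm_fin_zero, vnorm_fin_zero, mul_zero]
  · have hσ : 0 < sigmaMin G := by
      apply sigmaMin_pos G G⁻¹ (Matrix.nonsing_inv_mul G hG) hq
    have h1 : sigmaMin G * vnorm (G⁻¹.mulVec z) ≤ vnorm (G.mulVec (G⁻¹.mulVec z)) :=
      sigmaMin_mul_le G _
    rw [Matrix.mulVec_mulVec, Matrix.mul_nonsing_inv G hG, Matrix.one_mulVec] at h1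
    have := mul_le_mul_of_nonneg_left h1 (inv_pos.2 hσ).le
    calc vnorm (G⁻¹.mulVec z) = (sigmaMin G)⁻¹ * (sigmaMin G * vnorm (G⁻¹.mulVec z)) := by
          field_simp
      _ ≤ (sigmaMin G)⁻¹ * vnorm z := this

/-- Bound on the pseudo-inverse: `‖Zp x‖ ≤ σmin(Z)⁻¹ ‖x‖`. -/
lemma pinv_bound {m r : ℕ} (Z : Matrix (Fin m) (Fin r) ℝ) (hZZ : IsUnit (Zᵀ * Z).det)
    (Zp : Matrix (Fin r) (Fin m) ℝ) (hZp : Zp = (Zᵀ * Z)⁻¹ * Zᵀ) (hr : 0 < r)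
    (x : Fin m → ℝ) : vnorm (Zp.mulVec x) ≤ (sigmaMin Z)⁻¹ * vnorm x := by
  have hZpZ : Zp * Z = 1 := by
    rw [hZp, Matrix.mul_assoc, Matrix.nonsing_inv_mul _ hZZ]
  have hσ : 0 < sigmaMin Z := sigmaMin_pos Z Zp hZpZ hr
  -- P := Z * Zp is a symmetric idempotent
  set P := Z * Zp with hP
  have hPsym : Pᵀ = P := by
    rw [hP, hZp]
    rw [Matrix.transpose_mul, Matrix.transpose_mul, Matrix.transpose_nonsing_inv,
      Matrix.transpose_mul, Matrix.transpose_transpose]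
    rw [Matrix.mul_assoc]
  have hPidem : P * P = P := by
    rw [hP, Matrix.mul_assoc, ← Matrix.mul_assoc Zp Z Zp, hZpZ, Matrix.one_mul]
  have h1 : sigmaMin Z * vnorm (Zp.mulVec x) ≤ vnorm (Z.mulVec (Zp.mulVec x)) :=
    sigmaMin_mul_le Z _
  have h2 : vnorm (Z.mulVec (Zp.mulVec x)) ≤ vnorm x := by
    rw [Matrix.mulVec_mulVec]
    exact proj_contraction P hPsym hPidem x
  have h3 : sigmaMin Z * vnorm (Zp.mulVec x) ≤ vnorm x := le_trans h1 h2
  have := mul_le_mul_of_nonneg_left h3 (inv_pos.2 hσ).le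
  calc vnorm (Zp.mulVec x) = (sigmaMin Z)⁻¹ * (sigmaMin Z * vnorm (Zp.mulVec x)) := by
        field_simp
    _ ≤ (sigmaMin Z)⁻¹ * vnorm x := this

end Aux

namespace Aux

section Rho
variable {n pr r m : ℕ} (A : Matrix (Fin n) (Fin pr) ℝ) (B : Matrix (Fin n) (Fin r) ℝ)
  (Zp : Matrix (Fin r) (Fin m) ℝ) (k : ℕ)

private def rhoSet : Set ℝ :=
  {x | ∃ (u : Fin pr → ℝ) (w : Fin r → ℝ), w ∈ sparseCone Zp k ∧ Fin.append u w ≠ 0 ∧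
    x = vnorm ((hcat A B).mulVec (Fin.append u w)) ^ 2 / vnorm (Fin.append u w) ^ 2}

lemma rhoPlus_eq_sSup : rhoPlus (hcat A B) Zp k = sSup (rhoSet A B Zp k) := rfl
lemma rhoMinus_eq_sInf : rhoMinus (hcat A B) Zp k = sInf (rhoSet A B Zp k) := rfl

lemma rhoSet_bddBelow : BddBelow (rhoSet A B Zp k) := by
  refine ⟨0, ?_⟩
  rintro x ⟨u, w, -, -, rfl⟩
  positivity

lemma rhoSet_bddAbove : BddAbove (rhoSet A B Zp k) := by
  obtain ⟨C, hC, hbound⟩ := exists_mulVec_bound (hcat A B)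
  refine ⟨C ^ 2, ?_⟩
  rintro x ⟨u, w, -, hne, rfl⟩
  have hpos : 0 < vnorm (Fin.append u w) := vnorm_pos hne
  rw [div_le_iff₀ (by positivity)]
  have h := hbound (Fin.append u w)
  nlinarith [vnorm_nonneg ((hcat A B).mulVec (Fin.append u w))]

lemma mem_rhoSet (u : Fin pr → ℝ) {w : Fin r → ℝ} (hw : w ∈ sparseCone Zp k) (hwne : w ≠ 0) :
    vnorm ((hcat A B).mulVec (Fin.append u w)) ^ 2 / vnorm (Fin.append u w) ^ 2 ∈
      rhoSet A B Zp k :=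
  ⟨u, w, hw, append_ne_zero_of_right u hwne, rfl⟩

lemma rho_diff_nonneg_of_exists (hex : ∃ w ∈ sparseCone Zp k, w ≠ (0 : Fin r → ℝ)) :
    0 ≤ rhoPlus (hcat A B) Zp k - rhoMinus (hcat A B) Zp k := by
  obtain ⟨w, hw, hwne⟩ := hex
  have hmem := mem_rhoSet A B Zp k 0 hw hwne
  have h1 := csInf_le (rhoSet_bddBelow A B Zp k) hmem
  have h2 := le_csSup (rhoSet_bddAbove A B Zp k) hmem
  rw [rhoPlus_eq_sSup, rhoMinus_eq_sInf]
  linarith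

/-- The key polarization bound. -/
lemma key_rho {w : Fin r → ℝ} (hw : w ∈ sparseCone Zp k)
    (hconeex : ∃ w' ∈ sparseCone Zp k, w' ≠ (0 : Fin r → ℝ)) :
    vnorm (Aᵀ.mulVec (B.mulVec w)) ≤
      (1 / 2) * (rhoPlus (hcat A B) Zp k - rhoMinus (hcat A B) Zp k) * vnorm w := by
  have hdiff0 : 0 ≤ rhoPlus (hcat A B) Zp k - rhoMinus (hcat A B) Zp k :=
    rho_diff_nonneg_of_exists A B Zp k hconeex
  by_cases hwz : w = 0
  · rw [hwz, Matrix.mulVec_zero, Matrix.mulVec_zero, vnorm_zero, vnorm_zero, mul_zero]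
  set g := Aᵀ.mulVec (B.mulVec w) with hg
  have hwpos : 0 < vnorm w := vnorm_pos hwz
  by_cases hgz : g = 0
  · rw [hgz, vnorm_zero]
    positivity
  have hgpos : 0 < vnorm g := vnorm_pos hgz
  set c := vnorm w / vnorm g with hc
  have hcpos : 0 < c := div_pos hwpos hgpos
  set u := c • g with hu
  have hun : vnorm u = vnorm w := by
    rw [hu, vnorm_smul, abs_of_pos hcpos, hc]
    field_simp
  -- the two ratios
  have hD : vnorm (Fin.append u w) ^ 2 = vnorm w ^ 2 + vnorm w ^ 2 := by
    rw [vnorm_append_sq, hun]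
  have hD' : vnorm (Fin.append (-u) w) ^ 2 = vnorm w ^ 2 + vnorm w ^ 2 := by
    rw [vnorm_append_sq, vnorm_neg, hun]
  have hDpos : (0 : ℝ) < vnorm w ^ 2 + vnorm w ^ 2 := by positivity
  -- numerators
  have hnum : ∀ u' : Fin pr → ℝ,
      vnorm ((hcat A B).mulVec (Fin.append u' w)) ^ 2 =
        vnorm (A.mulVec u') ^ 2 + 2 * (u' ⬝ᵥ g) + vnorm (B.mulVec w) ^ 2 := by
    intro u'
    rw [hcat_mulVec, vnorm_add_sq]
    congr 2
    rw [dot_mulVec_left A u' (B.mulVec w), hg]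
  have hdot : u ⬝ᵥ g = c * vnorm g ^ 2 := by
    rw [hu, smul_dotProduct, dot_self_eq]
    rfl
  have hdotneg : (-u) ⬝ᵥ g = -(c * vnorm g ^ 2) := by
    rw [neg_dotProduct, hdot]
  have hAneg : vnorm (A.mulVec (-u)) = vnorm (A.mulVec u) := by
    rw [Matrix.mulVec_neg, vnorm_neg]
  -- membership bounds
  have hup := le_csSup (rhoSet_bddAbove A B Zp k) (mem_rhoSet A B Zp k u hw hwz)
  have hdown := csInf_le (rhoSet_bddBelow A B Zp k) (mem_rhoSet A B Zp k (-u) hw hwz)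
  rw [← rhoPlus_eq_sSup] at hup
  rw [← rhoMinus_eq_sInf] at hdown
  have hX1 : vnorm ((hcat A B).mulVec (Fin.append u w)) ^ 2 / vnorm (Fin.append u w) ^ 2 =
      (vnorm (A.mulVec u) ^ 2 + 2 * (c * vnorm g ^ 2) + vnorm (B.mulVec w) ^ 2) /
        (vnorm w ^ 2 + vnorm w ^ 2) := by
    rw [hnum u, hdot, hD]
  have hX2 : vnorm ((hcat A B).mulVec (Fin.append (-u) w)) ^ 2 / vnorm (Fin.append (-u) w) ^ 2 =
      (vnorm (A.mulVec u) ^ 2 - 2 * (c * vnorm g ^ 2) + vnorm (B.mulVec w) ^ 2) /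
        (vnorm w ^ 2 + vnorm w ^ 2) := by
    rw [hnum (-u), hdotneg, hD', hAneg]
    ring_nf
  rw [hX1] at hup
  rw [hX2] at hdown
  -- conclude
  have hgap : 4 * (c * vnorm g ^ 2) / (vnorm w ^ 2 + vnorm w ^ 2) ≤
      rhoPlus (hcat A B) Zp k - rhoMinus (hcat A B) Zp k := by
    have := sub_le_sub hup hdown
    calc 4 * (c * vnorm g ^ 2) / (vnorm w ^ 2 + vnorm w ^ 2)
        = (vnorm (A.mulVec u) ^ 2 + 2 * (c * vnorm g ^ 2) + vnorm (B.mulVec w) ^ 2) /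
            (vnorm w ^ 2 + vnorm w ^ 2) -
          (vnorm (A.mulVec u) ^ 2 - 2 * (c * vnorm g ^ 2) + vnorm (B.mulVec w) ^ 2) /
            (vnorm w ^ 2 + vnorm w ^ 2) := by
          field_simp
          ring
      _ ≤ _ := this
  have hcg : c * vnorm g ^ 2 = vnorm w * vnorm g := by
    rw [hc]; field_simp
  rw [hcg] at hgap
  rw [div_le_iff₀ hDpos] at hgap
  nlinarith

end Rho

end Aux

namespace Aux

/-- Normal equations from quadratic minimality. -/
lemma normal_eq {n q : ℕ} (A : Matrix (Fin n) (Fin q) ℝ) (x : Fin q → ℝ) (v : Fin n → ℝ)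
    (hmin : ∀ α : Fin q → ℝ, vnorm (A.mulVec x - v) ^ 2 ≤ vnorm (A.mulVec α - v) ^ 2) :
    Aᵀ.mulVec (A.mulVec x - v) = 0 := by
  set z := Aᵀ.mulVec (A.mulVec x - v) with hz
  have key : ∀ u : Fin q → ℝ, u ⬝ᵥ z = 0 := by
    intro u
    set a := A.mulVec x - v with ha
    set K := vnorm (A.mulVec u) ^ 2 with hK
    have hKnn : 0 ≤ K := by positivity
    set q0 := u ⬝ᵥ z with hq0
    have hq0' : a ⬝ᵥ (A.mulVec u) = q0 := by
      rw [hq0, hz, dotProduct_comm a (A.mulVec u)]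
      exact dot_mulVec_left A u a
    have hineq : ∀ t : ℝ, 0 ≤ 2 * t * q0 + t ^ 2 * K := by
      intro t
      have h := hmin (x + t • u)
      have hexp : A.mulVec (x + t • u) - v = a + t • (A.mulVec u) := by
        rw [Matrix.mulVec_add, ha]
        have : A.mulVec (t • u) = t • A.mulVec u := by
          rw [Matrix.mulVec_smul]
        rw [this]
        abel
      rw [hexp, vnorm_add_sq] at h
      have hdot : a ⬝ᵥ (t • A.mulVec u) = t * q0 := by
        rw [dotProduct_smul, hq0']
        rfl
      have hsm : vnorm (t • A.mulVec u) ^ 2 = t ^ 2 * K := by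
        rw [vnorm_smul, mul_pow, sq_abs, hK]
      rw [hdot, hsm] at h
      linarith
    have h1 := hineq (-q0 / (K + 1))
    have hKp : (0:ℝ) < K + 1 := by linarith
    have h2 : q0 ^ 2 * (K + 2) ≤ 0 := by
      have e : 2 * (-q0 / (K + 1)) * q0 + (-q0 / (K + 1)) ^ 2 * K
          = -(q0 ^ 2 * (K + 2)) / (K + 1) ^ 2 := by
        field_simp
        ring
      rw [e, le_div_iff₀ (pow_pos hKp 2)] at h1
      linarith
    have hq2 : q0 ^ 2 = 0 := by nlinarith [sq_nonneg q0]
    simpa using pow_eq_zero_iff (n := 2) (by norm_num) |>.1 hq2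
  funext i
  have := key (fun j => if j = i then 1 else 0)
  unfold dotProduct at this
  rw [Finset.sum_eq_single i] at this
  · simpa using this
  · intro b _ hb
    show (if b = i then (1:ℝ) else 0) * z b = 0
    rw [if_neg hb]; ring
  · intro hb; exact absurd (Finset.mem_univ _) hb

/-- Hölder: `-(‖a‖₁ ‖b‖∞) ≤ a ⬝ᵥ b`. -/
lemma dot_ge_neg_l1_linf {m : ℕ} (a b : Fin m → ℝ) :
    -(vnorm1 a * vnormInf b) ≤ a ⬝ᵥ b := by
  have hinf : ∀ i, |b i| ≤ vnormInf b := by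
    intro i
    exact le_ciSup (f := fun i : Fin m => |b i|) (Set.Finite.bddAbove (Set.finite_range _)) i
  have h : ∀ i : Fin m, -(|a i| * vnormInf b) ≤ a i * b i := by
    intro i
    have h1 : |a i * b i| ≤ |a i| * vnormInf b := by
      rw [abs_mul]
      exact mul_le_mul_of_nonneg_left (hinf i) (abs_nonneg _)
    have := neg_abs_le (a i * b i)
    linarith
  unfold dotProduct vnorm1
  calc -((∑ i, |a i|) * vnormInf b) = ∑ i, -(|a i| * vnormInf b) := by
        rw [Finset.sum_mul, ← Finset.sum_neg_distrib]
    _ ≤ ∑ i, a i * b i := Finset.sum_le_sum (fun i _ => h i)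

lemma vnormInf_neg {m : ℕ} (b : Fin m → ℝ) : vnormInf (-b) = vnormInf b := by
  unfold vnormInf
  congr 1; funext i; rw [Pi.neg_apply, abs_neg]

lemma vnorm1_restr {m : ℕ} (T : Finset (Fin m)) (q : Fin m → ℝ) :
    vnorm1 (restr T q) = ∑ i ∈ T, |q i| := by
  unfold vnorm1 restr
  rw [← Finset.sum_filter_add_sum_filter_not Finset.univ (· ∈ T)]
  have h1 : ∑ i ∈ Finset.univ.filter (· ∈ T), |if i ∈ T then q i else 0| = ∑ i ∈ T, |q i| := by
    apply Finset.sum_congr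
    · ext i; simp
    · intro i hi
      rw [if_pos hi]
  have h2 : ∑ i ∈ Finset.univ.filter (¬ · ∈ T), |if i ∈ T then q i else 0| = 0 := by
    apply Finset.sum_eq_zero
    intro i hi
    rw [Finset.mem_filter] at hi
    rw [if_neg hi.2, abs_zero]
  rw [h1, h2, add_zero]

lemma vnorm_restr_sq {m : ℕ} (T : Finset (Fin m)) (q : Fin m → ℝ) :
    vnorm (restr T q) ^ 2 = ∑ i ∈ T, q i ^ 2 := by
  rw [vnorm_sq]
  unfold restr
  rw [← Finset.sum_filter_add_sum_filter_not Finset.univ (· ∈ T)]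
  have h1 : ∑ i ∈ Finset.univ.filter (· ∈ T), (if i ∈ T then q i else 0) ^ 2 = ∑ i ∈ T, q i ^ 2 := by
    apply Finset.sum_congr
    · ext i; simp
    · intro i hi
      rw [if_pos hi]
  have h2 : ∑ i ∈ Finset.univ.filter (¬ · ∈ T), (if i ∈ T then q i else 0) ^ 2 = 0 := by
    apply Finset.sum_eq_zero
    intro i hi
    rw [Finset.mem_filter] at hi
    rw [if_neg hi.2]
    ring
  rw [h1, h2, add_zero]

/-- ‖q_T‖₁ ≤ √|T| ‖q_T‖₂. -/
lemma l1_le_sqrt_card_l2 {m : ℕ} (T : Finset (Fin m)) (q : Fin m → ℝ) :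
    vnorm1 (restr T q) ≤ Real.sqrt (T.card) * vnorm (restr T q) := by
  have h1 : vnorm1 (restr T q) ^ 2 ≤ (T.card : ℝ) * vnorm (restr T q) ^ 2 := by
    rw [vnorm1_restr, vnorm_restr_sq]
    have := sq_sum_le_card_mul_sum_sq (s := T) (f := fun i => |q i|)
    have heq : ∑ i ∈ T, |q i| ^ 2 = ∑ i ∈ T, q i ^ 2 := by
      apply Finset.sum_congr rfl; intro i _; rw [sq_abs]
    rw [heq] at this
    exact_mod_cast this
  have hl1 : 0 ≤ vnorm1 (restr T q) := by
    rw [vnorm1_restr]; positivity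
  have h2 : Real.sqrt (vnorm1 (restr T q) ^ 2) ≤
      Real.sqrt ((T.card : ℝ) * vnorm (restr T q) ^ 2) := Real.sqrt_le_sqrt h1
  rw [Real.sqrt_sq hl1, Real.sqrt_mul (Nat.cast_nonneg _), Real.sqrt_sq (vnorm_nonneg _)] at h2
  exact h2

lemma restr_mem_sparseCone {m r : ℕ} (Zp : Matrix (Fin r) (Fin m) ℝ) (T : Finset (Fin m))
    (q : Fin m → ℝ) {k : ℕ} (hk : T.card ≤ k) : Zp.mulVec (restr T q) ∈ sparseCone Zp k := by
  refine ⟨restr T q, ?_, rfl⟩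
  refine le_trans (le_trans (Finset.card_le_card ?_) (le_refl T.card)) hk
  intro i hi
  rw [Finset.mem_filter] at hi
  by_contra hc
  exact hi.2 (by unfold restr; rw [if_neg hc])

end Aux

namespace Aux

lemma mulVec_inj_of_full_rank {m r : ℕ} (Z : Matrix (Fin m) (Fin r) ℝ) (hZ : Z.rank = r)
    {v : Fin r → ℝ} (hv : Z.mulVec v = 0) : v = 0 := by
  have hker : Module.finrank ℝ (LinearMap.ker Z.mulVecLin) = 0 := by
    have := LinearMap.finrank_range_add_finrank_ker Z.mulVecLin
    have hrange : Module.finrank ℝ (LinearMap.range Z.mulVecLin) = r := hZ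
    rw [hrange] at this
    have hdim : Module.finrank ℝ (Fin r → ℝ) = r := by
      simp [Module.finrank_fintype_fun_eq_card]
    omega
  have hbot : LinearMap.ker Z.mulVecLin = ⊥ := Submodule.finrank_eq_zero.1 hker
  have hvmem : v ∈ LinearMap.ker Z.mulVecLin := by
    rw [LinearMap.mem_ker]
    exact hv
  rw [hbot] at hvmem
  simpa using hvmem

lemma ZtZ_isUnit {m r : ℕ} (Z : Matrix (Fin m) (Fin r) ℝ) (hZ : Z.rank = r) :
    IsUnit (Zᵀ * Z).det := by
  by_contra hcon
  have hdet : (Zᵀ * Z).det = 0 := by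
    rcases eq_or_ne ((Zᵀ * Z).det) 0 with h | h
    · exact h
    · exact absurd (IsUnit.mk0 _ h) hcon
  obtain ⟨v, hvne, hv⟩ := (Matrix.exists_mulVec_eq_zero_iff).2 hdet
  have hZv : Z.mulVec v = 0 := by
    have hdot : (Z.mulVec v) ⬝ᵥ (Z.mulVec v) = 0 := by
      rw [dot_mulVec_left Z v (Z.mulVec v), Matrix.mulVec_mulVec, hv]
      simp [dotProduct]
    rw [dot_self_eq] at hdot
    have := pow_eq_zero_iff (n := 2) (by norm_num) |>.1 hdot
    exact vnorm_eq_zero this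
  exact hvne (mulVec_inj_of_full_rank Z hZ hZv)

/-- A nonzero element exists in the sparse cone (`k ≥ 1`) when `Zp ≠ 0`. -/
lemma cone_has_nonzero {m r : ℕ} (Zp : Matrix (Fin r) (Fin m) ℝ) (hZp : Zp ≠ 0) {k : ℕ}
    (hk : 1 ≤ k) : ∃ w ∈ sparseCone Zp k, w ≠ (0 : Fin r → ℝ) := by
  have : ∃ i j, Zp i j ≠ 0 := by
    by_contra hc
    push_neg at hc
    exact hZp (by ext i j; exact hc i j)
  obtain ⟨i, j, hij⟩ := this
  refine ⟨Zp.mulVec (fun t => if t = j then 1 else 0), ⟨_, ?_, rfl⟩, ?_⟩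
  · calc (Finset.univ.filter fun t => (if t = j then (1:ℝ) else 0) ≠ 0).card
        ≤ ({j} : Finset (Fin m)).card := by
          apply Finset.card_le_card
          intro t ht
          rw [Finset.mem_filter] at ht
          rw [Finset.mem_singleton]
          by_contra hc
          exact ht.2 (by rw [if_neg hc])
      _ = 1 := Finset.card_singleton j
      _ ≤ k := hk
  · intro hc
    have := congrFun hc i
    unfold Matrix.mulVec dotProduct at this
    simp only [] at this
    rw [Finset.sum_eq_single j] at this
    · rw [show (if j = j then (1:ℝ) else 0) = 1 from if_pos rfl, mul_one] at this
      exact hij this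
    · intro b _ hb
      show Zp i b * (if b = j then (1:ℝ) else 0) = 0
      rw [if_neg hb, mul_zero]
    · intro hb; exact absurd (Finset.mem_univ _) hb

end Aux

namespace Aux

lemma mulVec_sum {a b : ℕ} {ι : Type} (M : Matrix (Fin a) (Fin b) ℝ) (s : Finset ι)
    (f : ι → Fin b → ℝ) :
    M.mulVec (∑ j ∈ s, f j) = ∑ j ∈ s, M.mulVec (f j) := by
  classical
  induction s using Finset.induction with
  | empty => simp [Matrix.mulVec_zero]
  | insert _ _ hne ih =>
      rw [Finset.sum_insert hne, Finset.sum_insert hne, Matrix.mulVec_add, ih]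

lemma vnorm_sum_le {a : ℕ} {ι : Type} (s : Finset ι) (f : ι → Fin a → ℝ) :
    vnorm (∑ j ∈ s, f j) ≤ ∑ j ∈ s, vnorm (f j) := by
  classical
  induction s using Finset.induction with
  | empty => simp [vnorm_zero]
  | insert _ _ hne ih =>
      rw [Finset.sum_insert hne, Finset.sum_insert hne]
      calc vnorm (f _ + ∑ j ∈ _, f j) ≤ vnorm (f _) + vnorm (∑ j ∈ _, f j) := vnorm_add_le _ _
        _ ≤ _ := by
            exact add_le_add le_rfl ih

end Aux

private lemma arith1 (lam a0 b0 DD N1 N2 : ℝ) (hlam : 0 < lam)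
    (h1 : DD + lam * N1 ≤ lam * N2)
    (h2 : lam * (N2 - a0 + b0) ≤ lam * N1)
    (h3 : -((a0 + b0) * (lam / 2)) ≤ DD) : b0 ≤ 3 * a0 := by
  nlinarith


open Aux

/-- In the full dictionary-LASSO setting with the block partition, the
free-part error satisfies
`‖d‖ ≤ W_{d,1}‖Z⁺(Zh)_{T₀₁}‖ + W_{d,2}‖(Zh)_{T₀}‖ + ‖(AᵀA)⁻¹Aᵀε‖`. -/
theorem statement5 {n p r m : ℕ} (hn : 0 < n) (hp : 0 < p) (hr : 0 < r) (hm : 0 < m)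
    (hrp : r ≤ p)
    (A : Matrix (Fin n) (Fin (p - r)) ℝ) (hAinv : IsUnit (Aᵀ * A).det)
    (B : Matrix (Fin n) (Fin r) ℝ)
    (Z : Matrix (Fin m) (Fin r) ℝ) (hZrank : Z.rank = r)
    (Zp : Matrix (Fin r) (Fin m) ℝ) (hZp : Zp = (Zᵀ * Z)⁻¹ * Zᵀ)
    (αstar : Fin (p - r) → ℝ) (βstar : Fin r → ℝ) (εv : Fin n → ℝ)
    (cvec : Fin n → ℝ) (hc : cvec = A.mulVec αstar + B.mulVec βstar + εv)
    (PA : Matrix (Fin n) (Fin n) ℝ) (hPA : PA = 1 - A * (Aᵀ * A)⁻¹ * Aᵀ)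
    (X : Matrix (Fin n) (Fin r) ℝ) (hX : X = PA * B)
    (y : Fin n → ℝ) (hy : y = PA.mulVec cvec)
    (lam : ℝ) (hlam : 0 < lam)
    (αhat : Fin (p - r) → ℝ) (βhat : Fin r → ℝ)
    (hmin : ∀ (α : Fin (p - r) → ℝ) (β : Fin r → ℝ),
      (1 / 2) * vnorm (A.mulVec αhat + B.mulVec βhat - cvec) ^ 2 +
          lam * vnorm1 (Z.mulVec βhat) ≤
        (1 / 2) * vnorm (A.mulVec α + B.mulVec β - cvec) ^ 2 +
          lam * vnorm1 (Z.mulVec β))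
    (h : Fin r → ℝ) (hh : h = βhat - βstar)
    (d : Fin (p - r) → ℝ) (hd : d = αhat - αstar)
    (T₀ : Finset (Fin m)) (hT₀ : T₀ = suppSet (Z.mulVec βstar))
    (s : ℕ) (hs : s = T₀.card) (hs1 : 1 ≤ s)
    (hfeas : vnormInf (Zpᵀ.mulVec (Xᵀ.mulVec εv)) < lam / 2)
    -- the block partition of `T₀ᶜ` into `T 1, …, T J`
    (l : ℕ) (hl : 0 < l) (J : ℕ) (hJ : 1 ≤ J) (T : ℕ → Finset (Fin m))
    (hUnion : (Finset.Icc 1 J).biUnion T = T₀ᶜ)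
    (hDisj : ∀ i ∈ Finset.Icc 1 J, ∀ j ∈ Finset.Icc 1 J, i ≠ j → Disjoint (T i) (T j))
    (hCard : ∀ j, 1 ≤ j → j < J → (T j).card = l)
    (hCardLast : (T J).card ≤ l)
    (hOrder : ∀ j, 2 ≤ j → j ≤ J → ∀ a ∈ T j, ∀ b ∈ T (j - 1),
      |Z.mulVec h a| ≤ |Z.mulVec h b|)
    (T01 : Finset (Fin m)) (hT01 : T01 = T₀ ∪ T 1)
    (Wd1 Wd2 : ℝ)
    (hWd1 : Wd1 = (1 / 2) * (sigmaMin (Aᵀ * A))⁻¹ *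
      (rhoPlus (hcat A B) Zp (s + l) - rhoMinus (hcat A B) Zp (s + l)))
    (hWd2 : Wd2 = (3 / 2) * (sigmaMin (Aᵀ * A))⁻¹ * (sigmaMin Z)⁻¹ *
      Real.sqrt ((s : ℝ) / (l : ℝ)) *
      (rhoPlus (hcat A B) Zp l - rhoMinus (hcat A B) Zp l)) :
    vnorm d ≤ Wd1 * vnorm (Zp.mulVec (restr T01 (Z.mulVec h))) +
        Wd2 * vnorm (restr T₀ (Z.mulVec h)) +
        vnorm (((Aᵀ * A)⁻¹ * Aᵀ).mulVec εv) := by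
  -- basic invertibility facts
  have hZZ : IsUnit (Zᵀ * Z).det := ZtZ_isUnit Z hZrank
  have hZpZ : Zp * Z = 1 := by
    rw [hZp, Matrix.mul_assoc, Matrix.nonsing_inv_mul _ hZZ]
  have hZpne : Zp ≠ 0 := by
    intro hc
    have h1 : (1 : Matrix (Fin r) (Fin r) ℝ) ⟨0, hr⟩ ⟨0, hr⟩ = 1 := Matrix.one_apply_eq _
    rw [← hZpZ, hc, Matrix.zero_mul] at h1
    simpa using h1
  set M : Matrix (Fin (p - r)) (Fin n) ℝ := (Aᵀ * A)⁻¹ * Aᵀ with hM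
  set q : Fin m → ℝ := Z.mulVec h with hq
  -- STEP 1+2 : d = M ε - M B h
  have hdec : d = M.mulVec εv - M.mulVec (B.mulVec h) := by
    set v : Fin n → ℝ := cvec - B.mulVec βhat with hv
    have hminq : ∀ α : Fin (p - r) → ℝ,
        vnorm (A.mulVec αhat - v) ^ 2 ≤ vnorm (A.mulVec α - v) ^ 2 := by
      intro α
      have hm1 := hmin α βhat
      have he : ∀ β : Fin (p - r) → ℝ, A.mulVec β + B.mulVec βhat - cvec = A.mulVec β - v := by
        intro β
        rw [hv]
        abel
      rw [he αhat, he α] at hm1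
      linarith
    have hNE := normal_eq A αhat v hminq
    have hNE2 : (Aᵀ * A).mulVec αhat = Aᵀ.mulVec v := by
      rw [Matrix.mulVec_sub] at hNE
      rw [← Matrix.mulVec_mulVec]
      have := sub_eq_zero.1 hNE
      exact this
    have hahat : αhat = M.mulVec v := by
      have h1 := congrArg (fun w => ((Aᵀ * A)⁻¹).mulVec w) hNE2
      simp only [Matrix.mulVec_mulVec] at h1
      rw [Matrix.nonsing_inv_mul _ hAinv, Matrix.one_mulVec] at h1
      exact h1
    have hvdec : v = A.mulVec αstar + εv - B.mulVec h := by
      rw [hv, hc, hh]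
      rw [Matrix.mulVec_sub]
      abel
    have hMA : ∀ w : Fin (p - r) → ℝ, M.mulVec (A.mulVec w) = w := by
      intro w
      rw [hM, Matrix.mulVec_mulVec, Matrix.mul_assoc,
        Matrix.nonsing_inv_mul _ hAinv, Matrix.one_mulVec]
    rw [hd, hahat, hvdec]
    rw [Matrix.mulVec_sub, Matrix.mulVec_add, hMA αstar]
    abel
  -- STEP 3 : cone condition
  have hcone : vnorm1 (restr T₀ᶜ q) ≤ 3 * vnorm1 (restr T₀ q) := by
    set Q : Matrix (Fin n) (Fin n) ℝ := A * (Aᵀ * A)⁻¹ * Aᵀ with hQ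
    have hQsym : Qᵀ = Q := by
      rw [hQ, Matrix.transpose_mul, Matrix.transpose_mul, Matrix.transpose_transpose,
        Matrix.transpose_nonsing_inv, Matrix.transpose_mul, Matrix.transpose_transpose,
        Matrix.mul_assoc]
    have hQidem : Q * Q = Q := by
      rw [hQ]
      calc (A * (Aᵀ * A)⁻¹ * Aᵀ) * (A * (Aᵀ * A)⁻¹ * Aᵀ)
          = A * ((Aᵀ * A)⁻¹ * ((Aᵀ * A) * ((Aᵀ * A)⁻¹ * Aᵀ))) := by
            simp only [Matrix.mul_assoc]
        _ = A * (Aᵀ * A)⁻¹ * Aᵀ := by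
            rw [← Matrix.mul_assoc (Aᵀ * A), Matrix.mul_nonsing_inv _ hAinv, Matrix.one_mul,
              ← Matrix.mul_assoc]
    have hPA1 : PA = 1 - Q := by rw [hPA, hQ]
    have hPAsym : PAᵀ = PA := by
      rw [hPA1, Matrix.transpose_sub, Matrix.transpose_one, hQsym]
    have hPAidem : PA * PA = PA := by
      rw [hPA1]
      have hexp : (1 - Q) * (1 - Q) = 1 - Q - Q + Q * Q := by noncomm_ring
      rw [hexp, hQidem]
      abel
    have hQA : Q * A = A := by
      rw [hQ]
      calc (A * (Aᵀ * A)⁻¹ * Aᵀ) * A = A * ((Aᵀ * A)⁻¹ * (Aᵀ * A)) := by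
            simp only [Matrix.mul_assoc]
        _ = A := by rw [Matrix.nonsing_inv_mul _ hAinv, Matrix.mul_one]
    have hPA_A : PA * A = 0 := by
      rw [hPA1, Matrix.sub_mul, Matrix.one_mul, hQA, sub_self]
    set e : Fin n → ℝ := X.mulVec βstar - y with he
    have hePA : e = -(PA.mulVec εv) := by
      have h1 : PA.mulVec (A.mulVec αstar) = 0 := by
        rw [Matrix.mulVec_mulVec, hPA_A, Matrix.zero_mulVec]
      rw [he, hy, hX, hc, ← Matrix.mulVec_mulVec, Matrix.mulVec_add, Matrix.mulVec_add, h1]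
      abel
    have hXtPA : Xᵀ * PA = Xᵀ := by
      rw [hX, Matrix.transpose_mul, hPAsym, Matrix.mul_assoc, hPAidem]
    have hXte : Xᵀ.mulVec e = -(Xᵀ.mulVec εv) := by
      rw [hePA, Matrix.mulVec_neg, Matrix.mulVec_mulVec, hXtPA]
    set atil : Fin (p - r) → ℝ := M.mulVec (cvec - B.mulVec βstar) with hatil
    set wst : Fin n → ℝ := cvec - B.mulVec βstar with hwst
    have hQM : A * M = Q := by rw [hM, hQ, ← Matrix.mul_assoc]
    have hAatil : A.mulVec atil + B.mulVec βstar - cvec = -(PA.mulVec wst) := by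
      rw [hatil, Matrix.mulVec_mulVec, hQM, hPA1, Matrix.sub_mulVec, Matrix.one_mulVec, hwst]
      abel
    have hXbs : e = -(PA.mulVec wst) := by
      rw [he, hy, hX, ← Matrix.mulVec_mulVec, hwst, Matrix.mulVec_sub]
      abel
    have hnormeq : vnorm (A.mulVec atil + B.mulVec βstar - cvec) = vnorm e := by
      rw [hAatil, hXbs]
    have hproj : X.mulVec βhat - y = PA.mulVec (A.mulVec αhat + B.mulVec βhat - cvec) := by
      have h0 : PA.mulVec (A.mulVec αhat) = 0 := by
        rw [Matrix.mulVec_mulVec, hPA_A, Matrix.zero_mulVec]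
      have hr1 : PA.mulVec (A.mulVec αhat + B.mulVec βhat - cvec) =
          PA.mulVec (A.mulVec αhat) + PA.mulVec (B.mulVec βhat) - PA.mulVec cvec := by
        rw [Matrix.mulVec_sub, Matrix.mulVec_add]
      rw [hr1, h0, hX, ← Matrix.mulVec_mulVec, hy]
      abel
    have hlow : vnorm (X.mulVec βhat - y) ≤ vnorm (A.mulVec αhat + B.mulVec βhat - cvec) := by
      rw [hproj]
      exact proj_contraction PA hPAsym hPAidem _
    have hbasic : (1 / 2) * vnorm (X.mulVec βhat - y) ^ 2 + lam * vnorm1 (Z.mulVec βhat) ≤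
        (1 / 2) * vnorm e ^ 2 + lam * vnorm1 (Z.mulVec βstar) := by
      have h1 := hmin atil βstar
      rw [hnormeq] at h1
      have h2 : vnorm (X.mulVec βhat - y) ^ 2 ≤
          vnorm (A.mulVec αhat + B.mulVec βhat - cvec) ^ 2 :=
        pow_le_pow_left₀ (vnorm_nonneg _) hlow 2
      linarith
    have hexp2 : X.mulVec βhat - y = X.mulVec h + e := by
      rw [he, hh, Matrix.mulVec_sub]
      abel
    have hquad : vnorm (X.mulVec βhat - y) ^ 2 =
        vnorm (X.mulVec h) ^ 2 + 2 * ((X.mulVec h) ⬝ᵥ e) + vnorm e ^ 2 := by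
      rw [hexp2, vnorm_add_sq]
    have hdot1 : (X.mulVec h) ⬝ᵥ e = q ⬝ᵥ (Zpᵀ.mulVec (Xᵀ.mulVec e)) := by
      rw [dot_mulVec_left X h e]
      have hhq : h = Zp.mulVec q := by
        rw [hq, Matrix.mulVec_mulVec, hZpZ, Matrix.one_mulVec]
      calc h ⬝ᵥ (Xᵀ.mulVec e) = (Zp.mulVec q) ⬝ᵥ (Xᵀ.mulVec e) := by rw [← hhq]
        _ = q ⬝ᵥ (Zpᵀ.mulVec (Xᵀ.mulVec e)) := dot_mulVec_left Zp q _
    have hl1q : 0 ≤ vnorm1 q := by unfold vnorm1; positivity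
    have hdot2 : -(vnorm1 q * (lam / 2)) ≤ (X.mulVec h) ⬝ᵥ e := by
      have hhold := dot_ge_neg_l1_linf q (Zpᵀ.mulVec (Xᵀ.mulVec e))
      have hinf : vnormInf (Zpᵀ.mulVec (Xᵀ.mulVec e)) ≤ lam / 2 := by
        rw [hXte, Matrix.mulVec_neg, vnormInf_neg]
        exact le_of_lt hfeas
      rw [hdot1]
      calc -(vnorm1 q * (lam / 2)) ≤ -(vnorm1 q * vnormInf (Zpᵀ.mulVec (Xᵀ.mulVec e))) := by
            apply neg_le_neg
            exact mul_le_mul_of_nonneg_left hinf hl1q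
        _ ≤ _ := hhold
    have hsplit1 : ∀ u : Fin m → ℝ, vnorm1 u = (∑ i ∈ T₀, |u i|) + ∑ i ∈ T₀ᶜ, |u i| := by
      intro u
      unfold vnorm1
      rw [← Finset.sum_add_sum_compl T₀ (fun i => |u i|)]
    have hZbh : Z.mulVec βhat = Z.mulVec βstar + q := by
      rw [hq, hh, Matrix.mulVec_sub]
      abel
    have hsupp : ∀ i, i ∈ T₀ᶜ → Z.mulVec βstar i = 0 := by
      intro i hi
      rw [hT₀] at hi
      rw [Finset.mem_compl] at hi
      by_contra hne
      exact hi (Finset.mem_filter.2 ⟨Finset.mem_univ _, hne⟩)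
    have hlb : vnorm1 (Z.mulVec βstar) - (∑ i ∈ T₀, |q i|) + ∑ i ∈ T₀ᶜ, |q i| ≤
        vnorm1 (Z.mulVec βhat) := by
      rw [hsplit1 (Z.mulVec βhat), hsplit1 (Z.mulVec βstar)]
      have h1 : ∑ i ∈ T₀ᶜ, |Z.mulVec βstar i| = 0 :=
        Finset.sum_eq_zero (fun i hi => by rw [hsupp i hi, abs_zero])
      have h2 : ∑ i ∈ T₀ᶜ, |Z.mulVec βhat i| = ∑ i ∈ T₀ᶜ, |q i| := by
        apply Finset.sum_congr rfl
        intro i hi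
        rw [hZbh, Pi.add_apply, hsupp i hi, zero_add]
      have h3 : ∑ i ∈ T₀, |Z.mulVec βstar i| - ∑ i ∈ T₀, |q i| ≤
          ∑ i ∈ T₀, |Z.mulVec βhat i| := by
        rw [← Finset.sum_sub_distrib]
        apply Finset.sum_le_sum
        intro i _
        rw [hZbh, Pi.add_apply]
        have habs := abs_add_le (Z.mulVec βstar i + q i) (-(q i))
        simp only [add_neg_cancel_right, abs_neg] at habs
        linarith
      rw [h1, h2]
      linarith
    have hq1 : vnorm1 q = (∑ i ∈ T₀, |q i|) + ∑ i ∈ T₀ᶜ, |q i| := hsplit1 q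
    have hXhnn : (0:ℝ) ≤ vnorm (X.mulVec h) ^ 2 := by positivity
    set a0 : ℝ := ∑ i ∈ T₀, |q i| with ha0
    set b0 : ℝ := ∑ i ∈ T₀ᶜ, |q i| with hb0
    have hstep1 : (X.mulVec h) ⬝ᵥ e + lam * vnorm1 (Z.mulVec βhat) ≤
        lam * vnorm1 (Z.mulVec βstar) := by
      rw [hquad] at hbasic
      linarith
    have hstep2 := mul_le_mul_of_nonneg_left hlb hlam.le
    have hdot2' : -((a0 + b0) * (lam / 2)) ≤ (X.mulVec h) ⬝ᵥ e := by
      rw [hq1] at hdot2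
      linarith
    have hfin : b0 ≤ 3 * a0 :=
      arith1 lam a0 b0 ((X.mulVec h) ⬝ᵥ e) (vnorm1 (Z.mulVec βhat)) (vnorm1 (Z.mulVec βstar))
        hlam hstep1 hstep2 hdot2'
    rw [vnorm1_restr, vnorm1_restr]
    exact hfin
  -- STEP 4 : block bound
  have hblock : ∑ j ∈ Finset.Icc 2 J, vnorm (restr (T j) q) ≤
      3 * Real.sqrt ((s : ℝ) / (l : ℝ)) * vnorm (restr T₀ q) := by
    have hlpos : (0:ℝ) < Real.sqrt l := Real.sqrt_pos.2 (by exact_mod_cast hl)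
    have hone : ∀ j ∈ Finset.Icc 2 J, vnorm (restr (T j) q) ≤
        vnorm1 (restr (T (j - 1)) q) / Real.sqrt l := by
      intro j hj
      rw [Finset.mem_Icc] at hj
      obtain ⟨hj2, hjJ⟩ := hj
      have hcardprev : (T (j - 1)).card = l := hCard (j - 1) (by omega) (by omega)
      obtain ⟨S, hS⟩ : ∃ S : ℝ, S = vnorm1 (restr (T (j - 1)) q) := ⟨_, rfl⟩
      have hSnn : 0 ≤ S := by rw [hS, vnorm1_restr (T (j - 1)) q]; positivity
      have hbound : ∀ a ∈ T j, |q a| ≤ S / l := by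
        intro a ha
        have hord := hOrder j hj2 hjJ a ha
        have hsum : (l : ℝ) * |q a| ≤ S := by
          rw [hS, vnorm1_restr]
          calc (l : ℝ) * |q a| = ∑ _b ∈ T (j - 1), |q a| := by
                rw [Finset.sum_const, hcardprev, nsmul_eq_mul]
            _ ≤ ∑ b ∈ T (j - 1), |q b| := Finset.sum_le_sum (fun b hb => hord b hb)
        rw [le_div_iff₀ (show (0:ℝ) < l by exact_mod_cast hl)]
        linarith [hsum]
      have hsq : vnorm (restr (T j) q) ^ 2 ≤ (l : ℝ) * (S / l) ^ 2 := by
        rw [vnorm_restr_sq]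
        calc ∑ i ∈ T j, q i ^ 2 ≤ ∑ _i ∈ T j, (S / l) ^ 2 := by
              apply Finset.sum_le_sum
              intro i hi
              have h1 := hbound i hi
              calc q i ^ 2 = |q i| ^ 2 := (sq_abs _).symm
                _ ≤ (S / l) ^ 2 := pow_le_pow_left₀ (abs_nonneg _) h1 2
          _ = ((T j).card : ℝ) * (S / l) ^ 2 := by rw [Finset.sum_const, nsmul_eq_mul]
          _ ≤ (l : ℝ) * (S / l) ^ 2 := by
              have hcle : (T j).card ≤ l := by
                rcases eq_or_lt_of_le hjJ with hEq | hLt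
                · rw [hEq]; exact hCardLast
                · rw [hCard j (by omega) hLt]
              apply mul_le_mul_of_nonneg_right _ (sq_nonneg _)
              exact_mod_cast hcle
      have h3 : (l : ℝ) * (S / l) ^ 2 = (S / Real.sqrt l) ^ 2 := by
        rw [div_pow, div_pow, Real.sq_sqrt (show (0:ℝ) ≤ (l:ℝ) by positivity)]
        have hlne : ((l:ℝ)) ≠ 0 := by positivity
        field_simp
      rw [h3] at hsq
      have h4 : 0 ≤ S / Real.sqrt l := div_nonneg hSnn hlpos.le
      have h5 := Real.sqrt_le_sqrt hsq
      rw [Real.sqrt_sq (vnorm_nonneg _), Real.sqrt_sq h4, hS] at h5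
      exact h5
    have hsum2 : ∑ j ∈ Finset.Icc 2 J, vnorm (restr (T j) q) ≤
        (∑ j ∈ Finset.Icc 2 J, vnorm1 (restr (T (j - 1)) q)) / Real.sqrt l := by
      rw [Finset.sum_div]
      exact Finset.sum_le_sum hone
    have hre : ∑ j ∈ Finset.Icc 2 J, vnorm1 (restr (T (j - 1)) q)
        = ∑ j ∈ Finset.Icc 1 (J - 1), vnorm1 (restr (T j) q) := by
      have hIcc : Finset.Icc 2 J = (Finset.Icc 1 (J - 1)).map (addRightEmbedding 1) := by
        rw [Finset.map_add_right_Icc]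
        congr 1
        omega
      rw [hIcc, Finset.sum_map]
      apply Finset.sum_congr rfl
      intro j hj
      simp only [addRightEmbedding_apply]
      have e1 : j + 1 - 1 = j := by omega
      rw [e1]
    have hsub : ∑ j ∈ Finset.Icc 1 (J - 1), vnorm1 (restr (T j) q) ≤
        ∑ j ∈ Finset.Icc 1 J, vnorm1 (restr (T j) q) := by
      apply Finset.sum_le_sum_of_subset_of_nonneg
      · apply Finset.Icc_subset_Icc_right
        omega
      · intro j _ _
        rw [vnorm1_restr]
        positivity
    have hpart : ∑ j ∈ Finset.Icc 1 J, vnorm1 (restr (T j) q) = vnorm1 (restr T₀ᶜ q) := by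
      rw [vnorm1_restr, ← hUnion, Finset.sum_biUnion]
      · apply Finset.sum_congr rfl
        intro j _
        rw [vnorm1_restr]
      · intro x hx y hy hxy
        exact hDisj x hx y hy hxy
    have hl1l2 : vnorm1 (restr T₀ q) ≤ Real.sqrt s * vnorm (restr T₀ q) := by
      have h5 := l1_le_sqrt_card_l2 T₀ q
      rw [← hs] at h5
      exact h5
    have hdiv : Real.sqrt ((s:ℝ) / (l:ℝ)) = Real.sqrt s / Real.sqrt l :=
      Real.sqrt_div' s (by positivity)
    calc ∑ j ∈ Finset.Icc 2 J, vnorm (restr (T j) q)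
        ≤ (∑ j ∈ Finset.Icc 2 J, vnorm1 (restr (T (j - 1)) q)) / Real.sqrt l := hsum2
      _ = (∑ j ∈ Finset.Icc 1 (J - 1), vnorm1 (restr (T j) q)) / Real.sqrt l := by rw [hre]
      _ ≤ (∑ j ∈ Finset.Icc 1 J, vnorm1 (restr (T j) q)) / Real.sqrt l := by
          gcongr
      _ = vnorm1 (restr T₀ᶜ q) / Real.sqrt l := by rw [hpart]
      _ ≤ (3 * vnorm1 (restr T₀ q)) / Real.sqrt l := by
          gcongr
      _ ≤ (3 * (Real.sqrt s * vnorm (restr T₀ q))) / Real.sqrt l := by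
          gcongr
      _ = 3 * Real.sqrt ((s:ℝ) / (l:ℝ)) * vnorm (restr T₀ q) := by
          rw [hdiv]
          field_simp
  have hTsub : ∀ j ∈ Finset.Icc 1 J, T j ⊆ T₀ᶜ := by
    intro j hj
    rw [← hUnion]
    exact Finset.subset_biUnion_of_mem T hj
  have hsplit : q = restr T01 q + ∑ j ∈ Finset.Icc 2 J, restr (T j) q := by
    funext i
    rw [Pi.add_apply, Finset.sum_apply]
    by_cases hiT0 : i ∈ T₀
    · have h1 : restr T01 q i = q i := by
        show (if i ∈ T01 then q i else 0) = q i
        rw [if_pos (by rw [hT01]; exact Finset.mem_union_left _ hiT0)]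
      have h2 : ∀ j ∈ Finset.Icc 2 J, restr (T j) q i = 0 := by
        intro j hj
        rw [Finset.mem_Icc] at hj
        have hjmem : j ∈ Finset.Icc 1 J := Finset.mem_Icc.2 ⟨by omega, hj.2⟩
        have hnot : i ∉ T j := by
          intro hc
          have hcc := hTsub j hjmem hc
          rw [Finset.mem_compl] at hcc
          exact hcc hiT0
        show (if i ∈ T j then q i else 0) = 0
        rw [if_neg hnot]
      rw [h1, Finset.sum_eq_zero h2, add_zero]
    · have hicomp : i ∈ T₀ᶜ := Finset.mem_compl.2 hiT0
      rw [← hUnion] at hicomp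
      obtain ⟨j0, hj0mem, hij0⟩ := Finset.mem_biUnion.1 hicomp
      have hj0Icc := Finset.mem_Icc.1 hj0mem
      by_cases hj01 : j0 = 1
      · subst hj01
        have h1 : restr T01 q i = q i := by
          show (if i ∈ T01 then q i else 0) = q i
          rw [if_pos (by rw [hT01]; exact Finset.mem_union_right _ hij0)]
        have h2 : ∀ j ∈ Finset.Icc 2 J, restr (T j) q i = 0 := by
          intro j hj
          rw [Finset.mem_Icc] at hj
          have hjmem : j ∈ Finset.Icc 1 J := Finset.mem_Icc.2 ⟨by omega, hj.2⟩
          have hne : j ≠ 1 := by omega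
          have hdisj := hDisj j hjmem 1 hj0mem hne
          have hnot : i ∉ T j := fun hc => (Finset.disjoint_left.1 hdisj hc) hij0
          show (if i ∈ T j then q i else 0) = 0
          rw [if_neg hnot]
        rw [h1, Finset.sum_eq_zero h2, add_zero]
      · have hj0ge2 : j0 ∈ Finset.Icc 2 J := Finset.mem_Icc.2 ⟨by omega, hj0Icc.2⟩
        have hnotT1 : i ∉ T 1 := by
          intro hc
          have h1mem : (1:ℕ) ∈ Finset.Icc 1 J := Finset.mem_Icc.2 ⟨le_refl 1, hJ⟩
          have hdisj := hDisj 1 h1mem j0 hj0mem (fun hh => hj01 hh.symm)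
          exact (Finset.disjoint_left.1 hdisj hc) hij0
        have hnotT01 : i ∉ T01 := by
          rw [hT01, Finset.mem_union]
          push_neg
          exact ⟨hiT0, hnotT1⟩
        have h1 : restr T01 q i = 0 := by
          show (if i ∈ T01 then q i else 0) = 0
          rw [if_neg hnotT01]
        have h2 : ∑ j ∈ Finset.Icc 2 J, restr (T j) q i = q i := by
          rw [Finset.sum_eq_single j0]
          · show (if i ∈ T j0 then q i else 0) = q i
            rw [if_pos hij0]
          · intro j hjmem2 hne
            have hj' := Finset.mem_Icc.1 hjmem2
            have hjmem : j ∈ Finset.Icc 1 J := Finset.mem_Icc.2 ⟨by omega, hj'.2⟩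
            have hdisj := hDisj j hjmem j0 hj0mem hne
            have hnot : i ∉ T j := fun hc => (Finset.disjoint_left.1 hdisj hc) hij0
            show (if i ∈ T j then q i else 0) = 0
            rw [if_neg hnot]
          · intro habs
            exact absurd hj0ge2 habs
        rw [h1, h2, zero_add]
  -- STEP 6+7 : combine
  have hT01card : T01.card ≤ s + l := by
    have hT1card : (T 1).card ≤ l := by
      rcases eq_or_lt_of_le hJ with hEq | hLt
      · rw [hEq]
        exact hCardLast
      · rw [hCard 1 (le_refl 1) hLt]
    calc T01.card ≤ T₀.card + (T 1).card := by
          rw [hT01]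
          exact Finset.card_union_le _ _
      _ ≤ s + l := add_le_add (le_of_eq hs.symm) hT1card
  have hTjcard : ∀ j ∈ Finset.Icc 2 J, (T j).card ≤ l := by
    intro j hj
    rw [Finset.mem_Icc] at hj
    rcases eq_or_lt_of_le hj.2 with hEq | hLt
    · rw [hEq]
      exact hCardLast
    · rw [hCard j (by omega) hLt]
  have hσAnn : 0 ≤ (sigmaMin (Aᵀ * A))⁻¹ := inv_nonneg.2 (sigmaMin_nonneg _)
  have hσZnn : 0 ≤ (sigmaMin Z)⁻¹ := inv_nonneg.2 (sigmaMin_nonneg _)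
  have hconeSL : ∃ w' ∈ sparseCone Zp (s + l), w' ≠ (0 : Fin r → ℝ) :=
    cone_has_nonzero Zp hZpne (by omega)
  have hconeL : ∃ w' ∈ sparseCone Zp l, w' ≠ (0 : Fin r → ℝ) :=
    cone_has_nonzero Zp hZpne hl
  have hpiece : ∀ (k : ℕ) (Tset : Finset (Fin m)), Tset.card ≤ k →
      (∃ w' ∈ sparseCone Zp k, w' ≠ (0 : Fin r → ℝ)) →
      vnorm (M.mulVec (B.mulVec (Zp.mulVec (restr Tset q)))) ≤
        (sigmaMin (Aᵀ * A))⁻¹ * ((1 / 2) *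
          (rhoPlus (hcat A B) Zp k - rhoMinus (hcat A B) Zp k) *
          vnorm (Zp.mulVec (restr Tset q))) := by
    intro k Tset hcard hex
    have hmem := restr_mem_sparseCone Zp Tset q hcard
    have h1 : vnorm (M.mulVec (B.mulVec (Zp.mulVec (restr Tset q)))) ≤
        (sigmaMin (Aᵀ * A))⁻¹ * vnorm (Aᵀ.mulVec (B.mulVec (Zp.mulVec (restr Tset q)))) := by
      have hib := inv_mulVec_bound (Aᵀ * A) hAinv (Aᵀ.mulVec (B.mulVec (Zp.mulVec (restr Tset q))))
      rw [hM, ← Matrix.mulVec_mulVec]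
      exact hib
    have h2 := key_rho A B Zp k hmem hex
    calc vnorm (M.mulVec (B.mulVec (Zp.mulVec (restr Tset q)))) ≤
        (sigmaMin (Aᵀ * A))⁻¹ * vnorm (Aᵀ.mulVec (B.mulVec (Zp.mulVec (restr Tset q)))) := h1
      _ ≤ _ := mul_le_mul_of_nonneg_left h2 hσAnn
  have hMB : vnorm (M.mulVec (B.mulVec h)) ≤
      Wd1 * vnorm (Zp.mulVec (restr T01 q)) + Wd2 * vnorm (restr T₀ q) := by
    have hhq2 : h = Zp.mulVec q := by
      rw [hq, Matrix.mulVec_mulVec, hZpZ, Matrix.one_mulVec]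
    have hBh : M.mulVec (B.mulVec h) =
        M.mulVec (B.mulVec (Zp.mulVec (restr T01 q))) +
        ∑ j ∈ Finset.Icc 2 J, M.mulVec (B.mulVec (Zp.mulVec (restr (T j) q))) := by
      conv_lhs => rw [hhq2, hsplit]
      rw [Matrix.mulVec_add, Aux.mulVec_sum, Matrix.mulVec_add, Aux.mulVec_sum,
        Matrix.mulVec_add, Aux.mulVec_sum]
    have htri2 : vnorm (M.mulVec (B.mulVec h)) ≤
        vnorm (M.mulVec (B.mulVec (Zp.mulVec (restr T01 q)))) +
        ∑ j ∈ Finset.Icc 2 J, vnorm (M.mulVec (B.mulVec (Zp.mulVec (restr (T j) q)))) := by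
      rw [hBh]
      calc vnorm (M.mulVec (B.mulVec (Zp.mulVec (restr T01 q))) +
            ∑ j ∈ Finset.Icc 2 J, M.mulVec (B.mulVec (Zp.mulVec (restr (T j) q)))) ≤
          vnorm (M.mulVec (B.mulVec (Zp.mulVec (restr T01 q)))) +
            vnorm (∑ j ∈ Finset.Icc 2 J, M.mulVec (B.mulVec (Zp.mulVec (restr (T j) q)))) :=
            vnorm_add_le _ _
        _ ≤ _ := by
            apply add_le_add le_rfl
            exact vnorm_sum_le _ _
    obtain ⟨cL, hcL⟩ : ∃ cL : ℝ,
        cL = (1 / 2) * (rhoPlus (hcat A B) Zp l - rhoMinus (hcat A B) Zp l) := ⟨_, rfl⟩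
    have hcLnn : 0 ≤ cL := by
      rw [hcL]
      have hnn := rho_diff_nonneg_of_exists A B Zp l hconeL
      linarith
    have hterm : ∀ j ∈ Finset.Icc 2 J,
        vnorm (M.mulVec (B.mulVec (Zp.mulVec (restr (T j) q)))) ≤
        ((sigmaMin (Aᵀ * A))⁻¹ * cL * (sigmaMin Z)⁻¹) * vnorm (restr (T j) q) := by
      intro j hj
      have hp1 := hpiece l (T j) (hTjcard j hj) hconeL
      rw [← hcL] at hp1
      have hp2 := pinv_bound Z hZZ Zp hZp hr (restr (T j) q)
      calc vnorm (M.mulVec (B.mulVec (Zp.mulVec (restr (T j) q)))) ≤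
          (sigmaMin (Aᵀ * A))⁻¹ * (cL * vnorm (Zp.mulVec (restr (T j) q))) := hp1
        _ ≤ (sigmaMin (Aᵀ * A))⁻¹ * (cL * ((sigmaMin Z)⁻¹ * vnorm (restr (T j) q))) := by
            apply mul_le_mul_of_nonneg_left _ hσAnn
            exact mul_le_mul_of_nonneg_left hp2 hcLnn
        _ = ((sigmaMin (Aᵀ * A))⁻¹ * cL * (sigmaMin Z)⁻¹) * vnorm (restr (T j) q) := by ring
    have hCnn : 0 ≤ (sigmaMin (Aᵀ * A))⁻¹ * cL * (sigmaMin Z)⁻¹ :=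
      mul_nonneg (mul_nonneg hσAnn hcLnn) hσZnn
    have hsum3 : ∑ j ∈ Finset.Icc 2 J, vnorm (M.mulVec (B.mulVec (Zp.mulVec (restr (T j) q)))) ≤
        Wd2 * vnorm (restr T₀ q) := by
      calc ∑ j ∈ Finset.Icc 2 J, vnorm (M.mulVec (B.mulVec (Zp.mulVec (restr (T j) q))))
          ≤ ∑ j ∈ Finset.Icc 2 J,
            ((sigmaMin (Aᵀ * A))⁻¹ * cL * (sigmaMin Z)⁻¹) * vnorm (restr (T j) q) :=
            Finset.sum_le_sum hterm
        _ = ((sigmaMin (Aᵀ * A))⁻¹ * cL * (sigmaMin Z)⁻¹) *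
            ∑ j ∈ Finset.Icc 2 J, vnorm (restr (T j) q) := by rw [Finset.mul_sum]
        _ ≤ ((sigmaMin (Aᵀ * A))⁻¹ * cL * (sigmaMin Z)⁻¹) *
            (3 * Real.sqrt ((s : ℝ) / (l : ℝ)) * vnorm (restr T₀ q)) :=
            mul_le_mul_of_nonneg_left hblock hCnn
        _ = Wd2 * vnorm (restr T₀ q) := by
            rw [hWd2, hcL]
            ring
    have h01 : vnorm (M.mulVec (B.mulVec (Zp.mulVec (restr T01 q)))) ≤
        Wd1 * vnorm (Zp.mulVec (restr T01 q)) := by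
      have hp01 := hpiece (s + l) T01 hT01card hconeSL
      calc vnorm (M.mulVec (B.mulVec (Zp.mulVec (restr T01 q)))) ≤
          (sigmaMin (Aᵀ * A))⁻¹ * ((1 / 2) *
            (rhoPlus (hcat A B) Zp (s + l) - rhoMinus (hcat A B) Zp (s + l)) *
            vnorm (Zp.mulVec (restr T01 q))) := hp01
        _ = Wd1 * vnorm (Zp.mulVec (restr T01 q)) := by
            rw [hWd1]
            ring
    linarith [htri2, hsum3, h01]

  have htri : vnorm d ≤ vnorm (M.mulVec (B.mulVec h)) + vnorm (M.mulVec εv) := by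
    rw [hdec]
    calc vnorm (M.mulVec εv - M.mulVec (B.mulVec h)) ≤
        vnorm (M.mulVec εv) + vnorm (M.mulVec (B.mulVec h)) := vnorm_sub_le _ _
      _ = _ := by ring
  calc vnorm d ≤ vnorm (M.mulVec (B.mulVec h)) + vnorm (M.mulVec εv) := htri
    _ ≤ (Wd1 * vnorm (Zp.mulVec (restr T01 q)) + Wd2 * vnorm (restr T₀ q)) +
        vnorm (M.mulVec εv) := by linarith
    _ = _ := by rw [hM, hq]
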